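/- Let 𝓛 be a learning space on a finite set X and let 𝓒 ⊆ 𝓛 be a subfamily that is totally ordered by inclusion (a chain of states). Then there exists a learning sequence σ of 𝓛 such that every member of 𝓒 is a prefix of σ. -/

import Mathlib

/-- A learning space on a finite set `X`. -/
def IsLearningSpace {α : Type*} [DecidableEq α] (X : Finset α) (L : Set (Finset α)) : Prop :=
  ∅ ∈ L ∧
  (∀ S ∈ L, S ⊆ X) ∧
  (∀ x ∈ X, ∃ S ∈ L, x ∈ S) ∧
  (∀ S ∈ L, S.Nonempty → ∃ x ∈ S, S.erase x ∈ L) ∧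
  (∀ S ∈ L, ∀ T ∈ L, S ∪ T ∈ L)

/-- A learning sequence of a learning space `L` on `X`: an enumeration of `X`
(each element occurring exactly once) every prefix of which is a state of `L`. -/
def IsLearningSequence {α : Type*} [DecidableEq α] (X : Finset α) (L : Set (Finset α))
    (σ : List α) : Prop :=
  σ.Nodup ∧ σ.toFinset = X ∧ ∀ i ≤ σ.length, (σ.take i).toFinset ∈ L

lemma ls_take_of_prefix {α : Type*} {σ τ : List α} (h : σ <+: τ) {i : ℕ} (hi : i ≤ σ.length) :
    τ.take i = σ.take i := by
  obtain ⟨ρ, rfl⟩ := h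
  exact List.take_append_of_le_length hi

lemma ls_exchange_aux {α : Type*} [DecidableEq α] {X : Finset α} {L : Set (Finset α)}
    (hL : IsLearningSpace X L) :
    ∀ n (U : Finset α), U.card ≤ n → U ∈ L → ∀ S ∈ L, ¬ U ⊆ S →
      ∃ x ∈ U, x ∉ S ∧ insert x S ∈ L := by
  intro n
  induction n with
  | zero =>
    intro U hU _ S _ hUS
    exact absurd (by simp [Finset.card_eq_zero.mp (Nat.le_zero.mp hU)]) hUS
  | succ n ih =>
    intro U hUcard hUL S hSL hUS
    have hne : U.Nonempty := by
      rcases Finset.eq_empty_or_nonempty U with rfl | h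
      · exact absurd (Finset.empty_subset S) hUS
      · exact h
    obtain ⟨x, hxU, hUx⟩ := hL.2.2.2.1 U hUL hne
    by_cases h : U.erase x ⊆ S
    · have hxS : x ∉ S := by
        intro hxS
        apply hUS
        intro y hy
        by_cases hyx : y = x
        · exact hyx ▸ hxS
        · exact h (Finset.mem_erase.mpr ⟨hyx, hy⟩)
      refine ⟨x, hxU, hxS, ?_⟩
      have hmem : S ∪ U ∈ L := hL.2.2.2.2 S hSL U hUL
      have heq : S ∪ U = insert x S := by
        ext y
        simp only [Finset.mem_union, Finset.mem_insert]
        constructor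
        · rintro (hy | hy)
          · exact Or.inr hy
          · by_cases hyx : y = x
            · exact Or.inl hyx
            · exact Or.inr (h (Finset.mem_erase.mpr ⟨hyx, hy⟩))
        · rintro (rfl | hy)
          · exact Or.inr hxU
          · exact Or.inl hy
      rwa [heq] at hmem
    · have hcard : (U.erase x).card ≤ n := by
        have := Finset.card_erase_of_mem hxU
        omega
      obtain ⟨y, hyU, hyS, hins⟩ := ih (U.erase x) hcard hUx S hSL h
      exact ⟨y, Finset.mem_of_mem_erase hyU, hyS, hins⟩

lemma ls_exchange {α : Type*} [DecidableEq α] {X : Finset α} {L : Set (Finset α)}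
    (hL : IsLearningSpace X L) {S T : Finset α} (hS : S ∈ L) (hT : T ∈ L)
    (hST : S ⊆ T) (hne : S ≠ T) :
    ∃ x ∈ T, x ∉ S ∧ insert x S ∈ L := by
  have : ¬ T ⊆ S := fun h => hne (Finset.Subset.antisymm hST h)
  exact ls_exchange_aux hL T.card T le_rfl hT S hS this

/-- Extension lemma: a learning sequence reaching `S` extends to one reaching `T ⊇ S`. -/
lemma ls_extend {α : Type*} [DecidableEq α] {X : Finset α} {L : Set (Finset α)}
    (hL : IsLearningSpace X L) :
    ∀ n (S T : Finset α), (T \ S).card ≤ n → S ∈ L → T ∈ L → S ⊆ T →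
    ∀ σ : List α, σ.Nodup → σ.toFinset = S → (∀ i, (σ.take i).toFinset ∈ L) →
    ∃ τ : List α, τ.Nodup ∧ τ.toFinset = T ∧ (∀ i, (τ.take i).toFinset ∈ L) ∧ σ <+: τ := by
  intro n
  induction n with
  | zero =>
    intro S T hcard hS hT hST σ hnd hto hpre
    have : T \ S = ∅ := Finset.card_eq_zero.mp (Nat.le_zero.mp hcard)
    have hTS : T ⊆ S := by
      intro y hy
      by_contra hyS
      exact absurd (Finset.mem_sdiff.mpr ⟨hy, hyS⟩) (by simp [this])
    have : S = T := Finset.Subset.antisymm hST hTS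
    exact ⟨σ, hnd, this ▸ hto, hpre, List.prefix_refl σ⟩
  | succ n ih =>
    intro S T hcard hS hT hST σ hnd hto hpre
    by_cases hEq : S = T
    · exact ⟨σ, hnd, hEq ▸ hto, hpre, List.prefix_refl σ⟩
    · obtain ⟨x, hxT, hxS, hins⟩ := ls_exchange hL hS hT hST hEq
      have hσ' : (σ ++ [x]).Nodup := by
        rw [List.nodup_append]
        refine ⟨hnd, List.nodup_singleton x, ?_⟩
        intro a ha b hb hax
        simp only [List.mem_singleton] at hb
        subst hb
        subst hax
        exact hxS (hto ▸ List.mem_toFinset.mpr ha)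
      have hto' : (σ ++ [x]).toFinset = insert x S := by
        rw [List.toFinset_append, hto]
        ext y
        simp only [Finset.mem_union, List.toFinset_cons, List.toFinset_nil,
          insert_empty_eq, Finset.mem_singleton, Finset.mem_insert]
        tauto
      have hpre' : ∀ i, ((σ ++ [x]).take i).toFinset ∈ L := by
        intro i
        rcases le_or_gt i σ.length with hi | hi
        · rw [List.take_append_of_le_length hi]
          exact hpre i
        · have : (σ ++ [x]).length ≤ i := by
            simp only [List.length_append, List.length_singleton]
            omega
          rw [List.take_of_length_le this, hto']
          exact hins
      have hsub : insert x S ⊆ T := Finset.insert_subset hxT hST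
      have hcard' : (T \ insert x S).card ≤ n := by
        have h1 : T \ insert x S = (T \ S).erase x := by
          ext y
          simp only [Finset.mem_sdiff, Finset.mem_erase, Finset.mem_insert]
          tauto
        have h2 : x ∈ T \ S := Finset.mem_sdiff.mpr ⟨hxT, hxS⟩
        rw [h1, Finset.card_erase_of_mem h2]
        omega
      obtain ⟨τ, h1, h2, h3, h4⟩ := ih (insert x S) T hcard' hins hT hsub (σ ++ [x]) hσ' hto' hpre'
      exact ⟨τ, h1, h2, h3, List.IsPrefix.trans (List.prefix_append σ [x]) h4⟩

/-- `X` itself is a state. -/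
lemma ls_top_mem {α : Type*} [DecidableEq α] {X : Finset α} {L : Set (Finset α)}
    (hL : IsLearningSpace X L) : X ∈ L := by
  have key : ∀ A : Finset α, A ⊆ X → ∃ S ∈ L, A ⊆ S ∧ S ⊆ X := by
    intro A
    induction A using Finset.induction_on with
    | empty => exact fun _ => ⟨∅, hL.1, Finset.empty_subset _, Finset.empty_subset _⟩
    | @insert a s _ ih =>
      intro h
      have hsX : s ⊆ X := fun y hy => h (Finset.mem_insert_of_mem hy)
      obtain ⟨S₁, hS₁, hsS₁, hS₁X⟩ := ih hsX
      obtain ⟨S₂, hS₂, haS₂⟩ := hL.2.2.1 a (h (Finset.mem_insert_self a s))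
      refine ⟨S₁ ∪ S₂, hL.2.2.2.2 S₁ hS₁ S₂ hS₂, ?_, ?_⟩
      · intro y hy
        rcases Finset.mem_insert.mp hy with rfl | hy
        · exact Finset.mem_union_right _ haS₂
        · exact Finset.mem_union_left _ (hsS₁ hy)
      · exact Finset.union_subset hS₁X (hL.2.1 S₂ hS₂)
  obtain ⟨S, hS, hXS, hSX⟩ := key X (Finset.Subset.refl X)
  rwa [Finset.Subset.antisymm hSX hXS] at hS

/-- Chain lemma: any finite chain of states is realized as prefixes of a learning sequence. -/
lemma ls_chain {α : Type*} [DecidableEq α] {X : Finset α} {L : Set (Finset α)}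
    (hL : IsLearningSpace X L) :
    ∀ n (F : Finset (Finset α)), F.card ≤ n → (∀ S ∈ F, S ∈ L) →
    (∀ S ∈ F, ∀ T ∈ F, S ⊆ T ∨ T ⊆ S) →
    ∃ σ : List α, σ.Nodup ∧ (∀ i, (σ.take i).toFinset ∈ L) ∧ σ.toFinset ∈ L ∧
      (∀ S ∈ F, ∃ i, i ≤ σ.length ∧ S = (σ.take i).toFinset) ∧
      (σ.toFinset = ∅ ∨ σ.toFinset ∈ F) := by
  intro n
  induction n with
  | zero =>
    intro F hF _ _
    have : F = ∅ := Finset.card_eq_zero.mp (Nat.le_zero.mp hF)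
    subst this
    exact ⟨[], List.nodup_nil, fun i => by simpa using hL.1, by simpa using hL.1,
      fun S hS => absurd hS (Finset.notMem_empty S), Or.inl (by simp)⟩
  | succ n ih =>
    intro F hF hFL hchain
    rcases Finset.eq_empty_or_nonempty F with rfl | hne
    · exact ⟨[], List.nodup_nil, fun i => by simpa using hL.1, by simpa using hL.1,
        fun S hS => absurd hS (Finset.notMem_empty S), Or.inl (by simp)⟩
    · obtain ⟨M, hM, hmax⟩ : ∃ M ∈ F, ∀ S ∈ F, ¬ M < S := by
        obtain ⟨M, hM, hmax⟩ := Finset.exists_maximal hne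
        exact ⟨M, hM, fun S hS hlt => hlt.ne (le_antisymm hlt.le (hmax hS hlt.le))⟩
      have hMmax : ∀ S ∈ F, S ⊆ M := by
        intro S hS
        rcases hchain S hS M hM with h | h
        · exact h
        · rcases eq_or_ne M S with rfl | hne'
          · exact Finset.Subset.refl _
          · exact absurd (lt_of_le_of_ne h hne') (hmax S hS)
      have hcard : (F.erase M).card ≤ n := by
        have := Finset.card_erase_of_mem hM
        have := Finset.card_pos.mpr hne
        omega
      obtain ⟨σ, hnd, hpre, hσL, hprefix, hmem⟩ := ih (F.erase M) hcard
        (fun S hS => hFL S (Finset.mem_of_mem_erase hS))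
        (fun S hS T hT => hchain S (Finset.mem_of_mem_erase hS) T (Finset.mem_of_mem_erase hT))
      have hσM : σ.toFinset ⊆ M := by
        rcases hmem with h | h
        · rw [h]; exact Finset.empty_subset M
        · exact hMmax _ (Finset.mem_of_mem_erase h)
      obtain ⟨τ, hτnd, hτto, hτpre, hστ⟩ := ls_extend hL (M \ σ.toFinset).card σ.toFinset M
        le_rfl hσL (hFL M hM) hσM σ hnd rfl hpre
      refine ⟨τ, hτnd, hτpre, hτto ▸ hFL M hM, ?_, Or.inr (hτto ▸ hM)⟩
      intro S hS
      rcases eq_or_ne S M with rfl | hSM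
      · exact ⟨τ.length, le_rfl, by rw [List.take_length, hτto]⟩
      · obtain ⟨i, hi, hSi⟩ := hprefix S (Finset.mem_erase.mpr ⟨hSM, hS⟩)
        refine ⟨i, le_trans hi hστ.length_le, ?_⟩
        rw [ls_take_of_prefix hστ hi]
        exact hSi

theorem stmt2 {α : Type*} [DecidableEq α] (X : Finset α) (L : Set (Finset α))
    (hL : IsLearningSpace X L) (C : Set (Finset α)) (hCL : C ⊆ L)
    (hchain : ∀ S ∈ C, ∀ T ∈ C, S ⊆ T ∨ T ⊆ S) :
    ∃ σ : List α, IsLearningSequence X L σ ∧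
      ∀ S ∈ C, ∃ i, S = (σ.take i).toFinset := by
  have hCfin : C.Finite := by
    apply Set.Finite.subset X.powerset.finite_toSet
    intro S hS
    simpa using hL.2.1 S (hCL hS)
  set F := hCfin.toFinset with hF
  have hFC : ∀ S, S ∈ F ↔ S ∈ C := fun S => hCfin.mem_toFinset
  obtain ⟨σ, hnd, hpre, hσL, hprefix, _⟩ := ls_chain hL F.card F le_rfl
    (fun S hS => hCL ((hFC S).mp hS))
    (fun S hS T hT => hchain S ((hFC S).mp hS) T ((hFC T).mp hT))
  obtain ⟨τ, hτnd, hτto, hτpre, hστ⟩ := ls_extend hL (X \ σ.toFinset).card σ.toFinset X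
    le_rfl hσL (ls_top_mem hL) (hL.2.1 _ hσL) σ hnd rfl hpre
  refine ⟨τ, ⟨hτnd, hτto, fun i _ => hτpre i⟩, ?_⟩
  intro S hS
  obtain ⟨i, hi, hSi⟩ := hprefix S ((hFC S).mpr hS)
  exact ⟨i, by rw [ls_take_of_prefix hστ hi]; exact hSi⟩
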